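/- Let a > 0, v > 0, and let L be a real number with 0 < L ≤ v²/(2a). Then √(2L/a) is the least element of the set of crossing times {T : ℝ | T ≥ 0 and there exists a differentiable x : ℝ → ℝ with x(0) = 0, deriv x(0) = 0, deriv x Lipschitz continuous with constant a, deriv x(t) ≤ v for all t ≥ 0, and x(T) = L}. That is, T_m = √(2L/a) is the shortest time in which a vehicle starting from rest can cross an intersection route of length L. -/

import Mathlib

lemma hasDerivAt_mul_abs (s : ℝ) : HasDerivAt (fun u : ℝ => u * |u|) (2 * |s|) s := by
  rcases lt_trichotomy s 0 with hs | hs | hs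
  · have h : HasDerivAt (fun u : ℝ => -(u ^ 2)) (2 * |s|) s := by
      have := (hasDerivAt_pow 2 s).neg
      refine this.congr_deriv ?_
      rw [abs_of_neg hs]; ring
    refine h.congr_of_eventuallyEq ?_
    filter_upwards [eventually_lt_nhds hs] with u hu
    rw [abs_of_neg hu]; ring
  · subst hs
    rw [hasDerivAt_iff_tendsto_slope]
    have h : (fun u : ℝ => |u|) =ᶠ[nhdsWithin 0 {(0:ℝ)}ᶜ] slope (fun u : ℝ => u * |u|) 0 := by
      filter_upwards [self_mem_nhdsWithin] with u hu
      have hu' : u ≠ 0 := hu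
      simp [slope_def_field, abs_zero]
      field_simp
    have : Filter.Tendsto (fun u : ℝ => |u|) (nhdsWithin 0 {(0:ℝ)}ᶜ) (nhds 0) := by
      have h2 : Filter.Tendsto (fun u : ℝ => |u|) (nhds 0) (nhds 0) := by
        simpa using continuous_abs.tendsto (0:ℝ)
      exact h2.mono_left nhdsWithin_le_nhds
    simpa using this.congr' h
  · have h : HasDerivAt (fun u : ℝ => u ^ 2) (2 * |s|) s := by
      have := hasDerivAt_pow 2 s
      refine this.congr_deriv ?_
      rw [abs_of_pos hs]; ring
    refine h.congr_of_eventuallyEq ?_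
    filter_upwards [eventually_gt_nhds hs] with u hu
    rw [abs_of_pos hu]; ring

theorem shortest_crossing_time_short_route
    (a v L : ℝ) (ha : 0 < a) (hv : 0 < v) (hL0 : 0 < L) (hL : L ≤ v ^ 2 / (2 * a)) :
    IsLeast
      {T : ℝ | 0 ≤ T ∧ ∃ x : ℝ → ℝ,
        Differentiable ℝ x ∧ x 0 = 0 ∧ deriv x 0 = 0 ∧
        LipschitzWith ⟨a, ha.le⟩ (deriv x) ∧
        (∀ t : ℝ, 0 ≤ t → deriv x t ≤ v) ∧
        x T = L}
      (Real.sqrt (2 * L / a)) := by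
  set T : ℝ := Real.sqrt (2 * L / a) with hT
  have h2La : 0 ≤ 2 * L / a := by positivity
  have hT0 : 0 ≤ T := Real.sqrt_nonneg _
  have hT2 : T ^ 2 = 2 * L / a := Real.sq_sqrt h2La
  constructor
  · -- membership
    have haT : a * T ≤ v := by
      have h1 : (a * T) ^ 2 ≤ v ^ 2 := by
        rw [mul_pow, hT2]
        rw [le_div_iff₀ (by positivity)] at hL
        have h2 : a ^ 2 * (2 * L / a) = 2 * a * L := by field_simp
        rw [h2]
        nlinarith
      nlinarith [mul_nonneg ha.le hT0]
    set x : ℝ → ℝ := fun t => a * (T * t - (t - T) * |t - T| / 2 - T ^ 2 / 2) with hxdef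
    have hx' : ∀ t : ℝ, HasDerivAt x (a * (T - |t - T|)) t := by
      intro t
      have h1 : HasDerivAt (fun t : ℝ => (t - T) * |t - T|) (2 * |t - T| * 1) t :=
        (hasDerivAt_mul_abs (t - T)).comp (h₂ := fun u : ℝ => u * |u|) t ((hasDerivAt_id t).sub_const T)
      have h2 := ((((hasDerivAt_id t).const_mul T).sub (h1.div_const 2)).sub_const
        (T ^ 2 / 2)).const_mul a
      refine h2.congr_deriv ?_
      ring
    have hderiv : ∀ t : ℝ, deriv x t = a * (T - |t - T|) := fun t => (hx' t).deriv
    refine ⟨hT0, x, fun t => (hx' t).differentiableAt, ?_, ?_, ?_, ?_, ?_⟩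
    · show a * (T * 0 - (0 - T) * |0 - T| / 2 - T ^ 2 / 2) = 0
      rw [zero_sub, abs_neg, abs_of_nonneg hT0]
      ring
    · rw [hderiv, zero_sub, abs_neg, abs_of_nonneg hT0]
      ring
    · refine LipschitzWith.of_dist_le_mul ?_
      intro s t
      rw [Real.dist_eq, Real.dist_eq, hderiv, hderiv]
      show |a * (T - |s - T|) - a * (T - |t - T|)| ≤ a * |s - t|
      rw [← mul_sub, abs_mul, abs_of_pos ha]
      refine mul_le_mul_of_nonneg_left ?_ ha.le
      have h1 := abs_abs_sub_abs_le_abs_sub (t - T) (s - T)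
      have h2 : t - T - (s - T) = t - s := by ring
      rw [h2] at h1
      calc |T - |s - T| - (T - |t - T|)| = |(|t - T| - |s - T|)| := by congr 1; ring
        _ ≤ |t - s| := h1
        _ = |s - t| := abs_sub_comm t s
    · intro t ht
      rw [hderiv]
      have h1 : a * (T - |t - T|) ≤ a * T := by
        have := abs_nonneg (t - T)
        nlinarith
      linarith
    · show a * (T * T - (T - T) * |T - T| / 2 - T ^ 2 / 2) = L
      rw [sub_self, abs_zero, mul_zero, zero_div, sub_zero, show T * T = T ^ 2 by ring, hT2]
      field_simp
      ring
  · -- lower bound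
    rintro S ⟨hS0, x, hdiff, hx0, hdx0, hlip, hbound, hxS⟩
    have hderiv_le : ∀ t : ℝ, 0 ≤ t → deriv x t ≤ a * t := by
      intro t ht
      have h := hlip.dist_le_mul t 0
      rw [Real.dist_eq, Real.dist_eq, hdx0, sub_zero, sub_zero] at h
      have : |deriv x t| ≤ a * t := by
        calc |deriv x t| ≤ (⟨a, ha.le⟩ : NNReal) * |t| := h
        _ = a * t := by rw [abs_of_nonneg ht]
      exact (le_abs_self _).trans this
    set g : ℝ → ℝ := fun t => a * t ^ 2 / 2 - x t with hg
    have hg' : ∀ t : ℝ, HasDerivAt g (a * t - deriv x t) t := by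
      intro t
      have h1 : HasDerivAt (fun t : ℝ => a * t ^ 2 / 2) (a * t) t := by
        have h2 := ((hasDerivAt_pow 2 t).const_mul a).div_const 2
        refine h2.congr_deriv ?_
        push_cast
        ring
      exact h1.sub (hdiff t).hasDerivAt
    have hmono : MonotoneOn g (Set.Icc 0 S) := by
      refine monotoneOn_of_deriv_nonneg (convex_Icc 0 S) ?_ ?_ ?_
      · exact (Differentiable.continuous (by
          intro t; exact ((hg' t).differentiableAt))).continuousOn
      · intro t ht; exact ((hg' t).differentiableAt).differentiableWithinAt
      · intro t ht
        rw [interior_Icc] at ht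
        rw [(hg' t).deriv]
        have := hderiv_le t ht.1.le
        linarith
    have h0S : g 0 ≤ g S := hmono (Set.left_mem_Icc.2 hS0) (Set.right_mem_Icc.2 hS0) hS0
    have hg0 : g 0 = 0 := by simp [hg, hx0]
    have hgS : g S = a * S ^ 2 / 2 - L := by simp [hg, hxS]
    have hS2 : 2 * L / a ≤ S ^ 2 := by
      have hge : 0 ≤ a * S ^ 2 / 2 - L := by rw [← hg0]; rw [hgS] at h0S; exact h0S
      rw [div_le_iff₀ ha]
      nlinarith [hge]
    calc T = Real.sqrt (2 * L / a) := hT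
    _ ≤ Real.sqrt (S ^ 2) := Real.sqrt_le_sqrt hS2
    _ = S := by rw [Real.sqrt_sq hS0]
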